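/- Suppose j(k+1) ≥ j², 1 < j ≤ k < n, and ρ ≤ j·(1 - j/(k+1)) with ρ < min(j, n-j). If P is a probability distribution on j-subsets of [n] supported on the ball B_ρ(v) = {w : |w ∩ v| ≥ j - ρ} around a fixed j-subset v, then there exists a k-subset C of [n] with approval proportion π_P(C) ≥ C(k-j, ρ)/C(n-j, ρ). -/

import Mathlib

open Finset

lemma choose_ratio_step (q m r : ℕ) (hm : q ≤ m) :
    q.choose (r+1) * m.choose r ≤ q.choose r * m.choose (r+1) := by
  have h1 := Nat.choose_succ_right_eq q r
  have h2 := Nat.choose_succ_right_eq m r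
  have hqr : q - r ≤ m - r := Nat.sub_le_sub_right hm r
  have key : q.choose (r+1) * m.choose r * (r+1) ≤ q.choose r * m.choose (r+1) * (r+1) := by
    calc q.choose (r+1) * m.choose r * (r+1) = (q.choose (r+1) * (r+1)) * m.choose r := by ring
    _ = q.choose r * (q - r) * m.choose r := by rw [h1]
    _ ≤ q.choose r * (m - r) * m.choose r := by
        exact Nat.mul_le_mul_right _ (Nat.mul_le_mul_left _ hqr)
    _ = q.choose r * (m.choose r * (m - r)) := by ring
    _ = q.choose r * (m.choose (r+1) * (r+1)) := by rw [h2]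
    _ = q.choose r * m.choose (r+1) * (r+1) := by ring
  exact Nat.le_of_mul_le_mul_right key (Nat.succ_pos r)

lemma choose_ratio_mono (q m t r : ℕ) (ht : t ≤ r) (hr : r ≤ q) (hm : q ≤ m) :
    q.choose r * m.choose t ≤ q.choose t * m.choose r := by
  induction r, ht using Nat.le_induction with
  | base => exact le_refl _
  | succ r htr ih =>
    have hrq : r < q := hr
    have ihh := ih (le_of_lt hrq)
    have step := choose_ratio_step q m r hm
    have pq : 0 < q.choose r := Nat.choose_pos (le_of_lt hrq)
    have pm : 0 < m.choose r := Nat.choose_pos (le_trans (le_of_lt hrq) hm)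
    have key : (q.choose (r+1) * m.choose t) * (q.choose r * m.choose r)
        ≤ (q.choose t * m.choose (r+1)) * (q.choose r * m.choose r) := by
      calc (q.choose (r+1) * m.choose t) * (q.choose r * m.choose r)
          = (q.choose (r+1) * m.choose r) * (q.choose r * m.choose t) := by ring
      _ ≤ (q.choose r * m.choose (r+1)) * (q.choose t * m.choose r) :=
          Nat.mul_le_mul step ihh
      _ = (q.choose t * m.choose (r+1)) * (q.choose r * m.choose r) := by ring
    exact Nat.le_of_mul_le_mul_right key (Nat.mul_pos pq pm)

lemma card_supersets {n k : ℕ} (S : Finset (Fin n)) (hS : S.card ≤ k) :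
    (((univ : Finset (Fin n)).powersetCard k).filter (fun C => S ⊆ C)).card
      = (n - S.card).choose (k - S.card) := by
  have H : (((univ : Finset (Fin n)).powersetCard k).filter (fun C => S ⊆ C)).card
      = ((univ \ S).powersetCard (k - S.card)).card := by
    apply Finset.card_bij' (fun C _ => C \ S) (fun D _ => D ∪ S)
    · intro C hC
      simp only [mem_filter, mem_powersetCard] at hC
      rw [mem_powersetCard]
      exact ⟨sdiff_subset_sdiff hC.1.1 le_rfl, by rw [card_sdiff_of_subset hC.2, hC.1.2]⟩
    · intro D hD
      rw [mem_powersetCard] at hD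
      have hdisj : Disjoint D S := disjoint_of_subset_left hD.1 (sdiff_disjoint)
      simp only [mem_filter, mem_powersetCard]
      refine ⟨⟨subset_univ _, ?_⟩, subset_union_right⟩
      rw [card_union_of_disjoint hdisj, hD.2]
      omega
    · intro C hC
      simp only [mem_filter, mem_powersetCard] at hC
      exact sdiff_union_of_subset hC.2
    · intro D hD
      rw [mem_powersetCard] at hD
      have hdisj : Disjoint D S := disjoint_of_subset_left hD.1 (sdiff_disjoint)
      rw [union_sdiff_right, sdiff_eq_self_of_disjoint hdisj]
  rw [H, card_powersetCard, card_sdiff_of_subset (subset_univ S), card_univ, Fintype.card_fin]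

theorem main_theorem_ball_supported (n j k ρ : ℕ) (hj : 1 < j) (hjk : j ≤ k) (hkn : k < n)
    (hρ : ρ * (k + 1) ≤ j * (k + 1 - j)) (hρD : ρ < min j (n - j))
    (v : Finset (Fin n)) (hv : v.card = j)
    (P : Finset (Fin n) → ℝ) (hP0 : ∀ ℓ, 0 ≤ P ℓ)
    (hP1 : ∑ ℓ ∈ (univ : Finset (Fin n)).powersetCard j, P ℓ = 1)
    (hsupp : ∀ ℓ : Finset (Fin n), ℓ.card = j → (ℓ ∩ v).card < j - ρ → P ℓ = 0) :
    ∃ C ∈ (univ : Finset (Fin n)).powersetCard k,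
      ((k - j).choose ρ : ℝ) / ((n - j).choose ρ : ℝ) ≤ ∑ ℓ ∈ C.powersetCard j, P ℓ := by
  have hjn : j ≤ n := le_trans hjk (le_of_lt hkn)
  have hρj : ρ < j := lt_of_lt_of_le hρD (min_le_left _ _)
  have hρm : ρ < n - j := lt_of_lt_of_le hρD (min_le_right _ _)
  have hqm : k - j ≤ n - j := Nat.sub_le_sub_right (le_of_lt hkn) j
  have hρq : ρ ≤ k - j := by
    by_contra hcon
    push_neg at hcon
    have h1 : k + 1 - j ≤ ρ := by omega
    have h2 : (k + 1 - j) * (k + 1) ≤ j * (k + 1 - j) :=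
      le_trans (Nat.mul_le_mul_right _ h1) hρ
    have h3 : (k + 1 - j) * (k + 1) ≤ (k + 1 - j) * j := by
      calc (k+1-j)*(k+1) ≤ j*(k+1-j) := h2
      _ = (k+1-j)*j := Nat.mul_comm _ _
    have h4 : k + 1 ≤ j := Nat.le_of_mul_le_mul_left h3 (by omega)
    omega
  set F := ((univ : Finset (Fin n)).powersetCard k).filter (fun C => v ⊆ C) with hF
  have hFcard : F.card = (n - j).choose (k - j) := by
    rw [hF, card_supersets v (by rw [hv]; exact hjk), hv]
  have hFne : F.Nonempty := by
    have hex : ∃ C, v ⊆ C ∧ C ⊆ (univ : Finset (Fin n)) ∧ C.card = k :=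
      exists_subsuperset_card_eq (subset_univ v)
        (by rw [hv]; exact hjk) (by rw [card_univ, Fintype.card_fin]; omega)
    obtain ⟨C, h1, h2, h3⟩ := hex
    exact ⟨C, by simp [hF, mem_filter, mem_powersetCard, h1, h2, h3]⟩
  -- pointwise counting bound
  have hN : ∀ ℓ ∈ (univ : Finset (Fin n)).powersetCard j, P ℓ ≠ 0 →
      (n-j).choose (k-j) * (k-j).choose ρ ≤ (n-j).choose ρ * (F.filter (fun C => ℓ ⊆ C)).card := by
    intro ℓ hℓ hPne
    rw [mem_powersetCard] at hℓ
    have hcardℓ : ℓ.card = j := hℓ.2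
    have hint : j - ρ ≤ (ℓ ∩ v).card := by
      by_contra hcc
      exact hPne (hsupp ℓ hcardℓ (by omega))
    have hsplit : (ℓ ∩ v).card + (ℓ \ v).card = j := by
      rw [card_inter_add_card_sdiff, hcardℓ]
    set t := (ℓ \ v).card with htdef
    have hintle : (ℓ ∩ v).card ≤ j := by omega
    have htρ : t ≤ ρ := by omega
    have huni : (v ∪ ℓ).card = j + t := by
      have := card_sdiff_add_card ℓ v
      rw [union_comm]
      omega
    have hcount : (F.filter (fun C => ℓ ⊆ C)).card = (n - j - t).choose (k - j - t) := by
      rw [hF, filter_filter]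
      have heq : (((univ : Finset (Fin n)).powersetCard k).filter (fun C => v ⊆ C ∧ ℓ ⊆ C))
          = (((univ : Finset (Fin n)).powersetCard k).filter (fun C => (v ∪ ℓ) ⊆ C)) := by
        apply filter_congr
        intro C _
        simp [union_subset_iff]
      rw [heq, card_supersets (v ∪ ℓ) (by omega), huni]
      congr 1 <;> omega
    rw [hcount]
    -- arithmetic
    have hid : (n-j).choose (k-j) * (k-j).choose t
        = (n-j).choose t * ((n-j) - t).choose ((k-j) - t) :=
      Nat.choose_mul (le_trans htρ hρq)
    have hmono : (k-j).choose ρ * (n-j).choose t ≤ (k-j).choose t * (n-j).choose ρ :=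
      choose_ratio_mono (k-j) (n-j) t ρ htρ hρq hqm
    have hpt : 0 < (n-j).choose t := Nat.choose_pos (by omega)
    have key : ((n-j).choose (k-j) * (k-j).choose ρ) * (n-j).choose t
        ≤ ((n-j).choose ρ * ((n-j) - t).choose ((k-j) - t)) * (n-j).choose t := by
      calc ((n-j).choose (k-j) * (k-j).choose ρ) * (n-j).choose t
          = ((k-j).choose ρ * (n-j).choose t) * (n-j).choose (k-j) := by ring
      _ ≤ ((k-j).choose t * (n-j).choose ρ) * (n-j).choose (k-j) :=
          Nat.mul_le_mul_right _ hmono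
      _ = ((n-j).choose (k-j) * (k-j).choose t) * (n-j).choose ρ := by ring
      _ = ((n-j).choose t * ((n-j) - t).choose ((k-j) - t)) * (n-j).choose ρ := by rw [hid]
      _ = ((n-j).choose ρ * ((n-j) - t).choose ((k-j) - t)) * (n-j).choose t := by ring
    have := Nat.le_of_mul_le_mul_right key hpt
    convert this using 3 <;> omega
  -- sum swap
  have hswap : ∑ C ∈ F, ∑ ℓ ∈ C.powersetCard j, P ℓ
      = ∑ ℓ ∈ (univ : Finset (Fin n)).powersetCard j,
          P ℓ * ((F.filter (fun C => ℓ ⊆ C)).card : ℝ) := by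
    have h1 : ∀ C ∈ F, ∑ ℓ ∈ C.powersetCard j, P ℓ
        = ∑ ℓ ∈ (univ : Finset (Fin n)).powersetCard j, if ℓ ⊆ C then P ℓ else 0 := by
      intro C _
      rw [← sum_filter]
      apply sum_congr _ (fun _ _ => rfl)
      ext ℓ
      simp only [mem_powersetCard, mem_filter, subset_univ, true_and]
      tauto
    rw [sum_congr rfl h1, sum_comm]
    refine sum_congr rfl fun ℓ _ => ?_
    rw [← sum_filter, sum_const, nsmul_eq_mul, mul_comm]
  -- key inequality
  have hkey : ((n-j).choose (k-j) : ℝ) * ((k-j).choose ρ : ℝ)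
      ≤ ((n-j).choose ρ : ℝ) * ∑ C ∈ F, ∑ ℓ ∈ C.powersetCard j, P ℓ := by
    rw [hswap, mul_sum]
    calc ((n-j).choose (k-j) : ℝ) * ((k-j).choose ρ : ℝ)
        = ∑ ℓ ∈ (univ : Finset (Fin n)).powersetCard j,
            P ℓ * (((n-j).choose (k-j) * (k-j).choose ρ : ℕ) : ℝ) := by
          rw [← sum_mul, hP1, one_mul]; push_cast; ring
    _ ≤ ∑ ℓ ∈ (univ : Finset (Fin n)).powersetCard j,
            ((n-j).choose ρ : ℝ) * (P ℓ * ((F.filter (fun C => ℓ ⊆ C)).card : ℝ)) := by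
          apply sum_le_sum
          intro ℓ hℓ
          by_cases hz : P ℓ = 0
          · simp [hz]
          · have hb := hN ℓ hℓ hz
            have hb' : (((n-j).choose (k-j) * (k-j).choose ρ : ℕ) : ℝ)
                ≤ (((n-j).choose ρ * (F.filter (fun C => ℓ ⊆ C)).card : ℕ) : ℝ) :=
              Nat.cast_le.mpr hb
            calc P ℓ * (((n-j).choose (k-j) * (k-j).choose ρ : ℕ) : ℝ)
                ≤ P ℓ * (((n-j).choose ρ * (F.filter (fun C => ℓ ⊆ C)).card : ℕ) : ℝ) :=
                  mul_le_mul_of_nonneg_left hb' (hP0 ℓ)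
            _ = ((n-j).choose ρ : ℝ) * (P ℓ * ((F.filter (fun C => ℓ ⊆ C)).card : ℝ)) := by
                  push_cast; ring
  -- conclude via averaging
  have hposρ : (0 : ℝ) < ((n-j).choose ρ : ℝ) :=
    Nat.cast_pos.mpr (Nat.choose_pos (le_of_lt hρm))
  have havg : ∑ _C ∈ F, (((k-j).choose ρ : ℝ) / ((n-j).choose ρ : ℝ))
      ≤ ∑ C ∈ F, ∑ ℓ ∈ C.powersetCard j, P ℓ := by
    rw [sum_const, nsmul_eq_mul, hFcard, ← mul_div_assoc, div_le_iff₀ hposρ]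
    calc ((n-j).choose (k-j) : ℝ) * ((k-j).choose ρ : ℝ)
        ≤ ((n-j).choose ρ : ℝ) * ∑ C ∈ F, ∑ ℓ ∈ C.powersetCard j, P ℓ := hkey
    _ = (∑ C ∈ F, ∑ ℓ ∈ C.powersetCard j, P ℓ) * ((n-j).choose ρ : ℝ) := mul_comm _ _
  obtain ⟨C, hC, hle⟩ := exists_le_of_sum_le hFne havg
  exact ⟨C, (mem_filter.mp hC).1, hle⟩
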